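/- Suppose that for i = 1,2 there exist measures μᵢ* ∈ ca₊(Ωᵢ) such that μᵢ ≪ μᵢ* for all μᵢ ∈ Hᵢ°. Then H is closed under liminf; equivalently, for every pointwise increasing sequence (hⁿ) in H, the pointwise supremum sup_n hⁿ belongs to H. -/

import Mathlib

open MeasureTheory Filter ENNReal NNReal

section Defs

variable {Ω : Type*} [TopologicalSpace Ω] [MeasurableSpace Ω]

/-- The polar of a set `H` of `[0,∞]`-valued Borel functions: all finite positive Borel
measures `μ` with `⟨f,μ⟩ = ∫ f dμ ≤ 1` for every `f ∈ H`. -/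
def polar (H : Set (Ω → ℝ≥0∞)) : Set (Measure Ω) :=
  {μ | IsFiniteMeasure μ ∧ ∀ f ∈ H, ∫⁻ x, f x ∂μ ≤ 1}

/-- The bipolar of a set `H` of `[0,∞]`-valued Borel functions. -/
def bipolar (H : Set (Ω → ℝ≥0∞)) : Set (Ω → ℝ≥0∞) :=
  {f | Measurable f ∧ ∀ μ ∈ polar H, ∫⁻ x, f x ∂μ ≤ 1}

/-- `h` is (the coercion of) a bounded continuous real-valued function. -/
def IsCb (h : Ω → ℝ≥0∞) : Prop :=
  Continuous h ∧ ∃ C : ℝ≥0, ∀ x, h x ≤ C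

/-- `h` is (the coercion of) a bounded upper semicontinuous real-valued function. -/
def IsUb (h : Ω → ℝ≥0∞) : Prop :=
  UpperSemicontinuous h ∧ ∃ C : ℝ≥0, ∀ x, h x ≤ C

/-- `H` is monotone. -/
def MonotoneSet (H : Set (Ω → ℝ≥0∞)) : Prop :=
  ∀ f : Ω → ℝ≥0∞, Measurable f → (∃ h ∈ H, ∀ x, f x ≤ h x) → f ∈ H

/-- `H` is regular. -/
def RegularSet (H : Set (Ω → ℝ≥0∞)) : Prop :=
  ∀ μ : Measure Ω, IsFiniteMeasure μ →
    sSup {x : ℝ≥0∞ | ∃ h ∈ H, IsUb h ∧ x = ∫⁻ ω, h ω ∂μ} =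
      sSup {x : ℝ≥0∞ | ∃ h ∈ H, IsCb h ∧ x = ∫⁻ ω, h ω ∂μ}

/-- `H` is closed under `liminf`. -/
def LiminfClosed (H : Set (Ω → ℝ≥0∞)) : Prop :=
  ∀ h : ℕ → Ω → ℝ≥0∞, (∀ n, h n ∈ H) →
    (fun x => liminf (fun n => h n x) atTop) ∈ H

/-- `H` is convex. -/
def ConvexSet (H : Set (Ω → ℝ≥0∞)) : Prop :=
  ∀ f ∈ H, ∀ g ∈ H, ∀ t : ℝ≥0∞, t ≤ 1 →
    (fun x => t * f x + (1 - t) * g x) ∈ H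

/-- The sublinear pricing functional `π(f) = sup_{μ ∈ H°} ⟨f,μ⟩` associated with `H`. -/
noncomputable def priceH (H : Set (Ω → ℝ≥0∞)) (f : Ω → ℝ≥0∞) : ℝ≥0∞ :=
  sSup {x : ℝ≥0∞ | ∃ μ ∈ polar H, x = ∫⁻ ω, f ω ∂μ}

end Defs

section Transport

variable {Ω₁ Ω₂ : Type*}
  [TopologicalSpace Ω₁] [MeasurableSpace Ω₁]
  [TopologicalSpace Ω₂] [MeasurableSpace Ω₂]

/-- The set `H` of all nonnegative Borel functions on the product space dominated by a sum
`h₁ ⊕ h₂` with `π₁(h₁) + π₂(h₂) ≤ 1`. -/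
def transportSet (H₁ : Set (Ω₁ → ℝ≥0∞)) (H₂ : Set (Ω₂ → ℝ≥0∞)) :
    Set (Ω₁ × Ω₂ → ℝ≥0∞) :=
  {f | Measurable f ∧ ∃ (h₁ : Ω₁ → ℝ≥0∞) (h₂ : Ω₂ → ℝ≥0∞),
    Measurable h₁ ∧ Measurable h₂ ∧ (∀ ω, f ω ≤ h₁ ω.1 + h₂ ω.2) ∧
    priceH H₁ h₁ + priceH H₂ h₂ ≤ 1}

/-- The finite positive Borel measures on the product space whose first marginal lies in
`H₁°` and whose second marginal lies in `H₂°`. -/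
def marginalSet (H₁ : Set (Ω₁ → ℝ≥0∞)) (H₂ : Set (Ω₂ → ℝ≥0∞)) :
    Set (Measure (Ω₁ × Ω₂)) :=
  {μ | IsFiniteMeasure μ ∧ μ.map Prod.fst ∈ polar H₁ ∧ μ.map Prod.snd ∈ polar H₂}

/-- The transport functional
`π(f) = sup{⟨f,μ⟩ : μ ∈ ca₊(Ω₁ × Ω₂), μ₁ ∈ H₁°, μ₂ ∈ H₂°}`. -/
noncomputable def transportPrice (H₁ : Set (Ω₁ → ℝ≥0∞)) (H₂ : Set (Ω₂ → ℝ≥0∞))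
    (f : Ω₁ × Ω₂ → ℝ≥0∞) : ℝ≥0∞ :=
  sSup {x : ℝ≥0∞ | ∃ μ ∈ marginalSet H₁ H₂, x = ∫⁻ ω, f ω ∂μ}

end Transport


section BKaux

/-- The transform `t ↦ 1 - (1+t)⁻¹ = t/(1+t)` on `[0,∞]`. -/
noncomputable def bkPsi (t : ℝ≥0∞) : ℝ≥0∞ := 1 - (1 + t)⁻¹

/-- Inverse transform. -/
noncomputable def bkPsiInv (s : ℝ≥0∞) : ℝ≥0∞ := (1 - s)⁻¹ - 1

lemma bkPsi_le_one (t : ℝ≥0∞) : bkPsi t ≤ 1 := tsub_le_self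

lemma bkPsi_ne_top (t : ℝ≥0∞) : bkPsi t ≠ ⊤ :=
  ((bkPsi_le_one t).trans_lt one_lt_top).ne

lemma bk_inv_le_one (t : ℝ≥0∞) : (1 + t)⁻¹ ≤ 1 :=
  ENNReal.inv_le_one.mpr le_self_add

lemma bkPsiInv_bkPsi (t : ℝ≥0∞) : bkPsiInv (bkPsi t) = t := by
  unfold bkPsi bkPsiInv
  rw [ENNReal.sub_sub_cancel one_ne_top (bk_inv_le_one t), inv_inv,
    ENNReal.add_sub_cancel_left one_ne_top]

lemma bkPsi_mono : Monotone bkPsi := fun a b hab =>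
  tsub_le_tsub_left (ENNReal.inv_le_inv.mpr (add_le_add_right hab 1)) 1

lemma bkPsi_continuous : Continuous bkPsi :=
  (ENNReal.continuous_sub_left one_ne_top).comp ((continuous_add_left (1:ℝ≥0∞)).inv)

lemma bkPsiInv_continuous : Continuous bkPsiInv :=
  (ENNReal.continuous_sub_right 1).comp ((ENNReal.continuous_sub_left one_ne_top).inv)

lemma bkPsi_top : bkPsi ⊤ = 1 := by simp [bkPsi]

lemma bk_real_key {x y : ℝ} (hx : 0 ≤ x) (hy : 0 ≤ y) :
    ((1 - (1 + x)⁻¹) + (1 - (1 + y)⁻¹)) / 2 + ((1 - (1 + y)⁻¹) - (1 - (1 + x)⁻¹)) ^ 2 / 4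
      ≤ 1 - (1 + (x + y) / 2)⁻¹ := by
  have h1 : (0:ℝ) < 1 + x := by linarith
  have h2 : (0:ℝ) < 1 + y := by linarith
  have h3 : (0:ℝ) < 2 + x + y := by linarith
  have key : 1 - (1 + (x + y) / 2)⁻¹ -
      (((1 - (1 + x)⁻¹) + (1 - (1 + y)⁻¹)) / 2 + ((1 - (1 + y)⁻¹) - (1 - (1 + x)⁻¹)) ^ 2 / 4)
      = (x - y) ^ 2 * (x + y + 2 * x * y) / (4 * (2 + x + y) * (1 + x) ^ 2 * (1 + y) ^ 2) := by
    field_simp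
    ring
  have hden : (0:ℝ) < 4 * (2 + x + y) * (1 + x) ^ 2 * (1 + y) ^ 2 :=
    mul_pos (mul_pos (by linarith) (pow_pos h1 2)) (pow_pos h2 2)
  have hnum : (0:ℝ) ≤ (x - y) ^ 2 * (x + y + 2 * x * y) :=
    mul_nonneg (sq_nonneg _) (by nlinarith [mul_nonneg hx hy])
  have := div_nonneg hnum hden.le
  linarith [key, this]

lemma bkPsi_toReal {t : ℝ≥0∞} (ht : t ≠ ⊤) :
    (bkPsi t).toReal = 1 - (1 + t.toReal)⁻¹ := by
  unfold bkPsi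
  rw [ENNReal.toReal_sub_of_le (bk_inv_le_one t) one_ne_top, ENNReal.toReal_inv,
    ENNReal.toReal_add one_ne_top ht, ENNReal.toReal_one]

lemma bkPsi_concave_aux {a b : ℝ≥0∞} (hab : a ≤ b) :
    (bkPsi a + bkPsi b) / 2 +
      ((bkPsi a - bkPsi b) ^ 2 + (bkPsi b - bkPsi a) ^ 2) / 4 ≤ bkPsi ((a + b) / 2) := by
  rw [tsub_eq_zero_of_le (bkPsi_mono hab), zero_pow (two_ne_zero), zero_add]
  rcases eq_or_ne b ⊤ with rfl | hbt
  · -- b = ⊤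
    rw [add_top, ENNReal.top_div_of_ne_top (by norm_num), bkPsi_top]
    set u := bkPsi a with hu
    have hu1 : u ≤ 1 := bkPsi_le_one a
    have h1 : (1 - u) ^ 2 ≤ 1 - u := by
      rw [sq]
      calc (1 - u) * (1 - u) ≤ (1 - u) * 1 := mul_le_mul_right tsub_le_self _
      _ = 1 - u := mul_one _
    calc (u + 1) / 2 + (1 - u) ^ 2 / 4
        ≤ (u + 1) / 2 + (1 - u) / 2 := by
          refine add_le_add_right ?_ _
          calc (1 - u) ^ 2 / 4 ≤ (1 - u) / 4 := ENNReal.div_le_div_right h1 4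
          _ = (1 - u) * 4⁻¹ := by rw [div_eq_mul_inv]
          _ ≤ (1 - u) * 2⁻¹ := mul_le_mul_right (ENNReal.inv_le_inv.mpr (by norm_num)) _
          _ = (1 - u) / 2 := by rw [div_eq_mul_inv]
      _ = (u + 1 + (1 - u)) / 2 := (ENNReal.add_div).symm
      _ = 1 := by
          rw [show u + 1 + (1 - u) = u + (1 - u) + 1 by ring, add_comm u (1 - u),
            tsub_add_cancel_of_le hu1, one_add_one_eq_two, ENNReal.div_self two_ne_zero ENNReal.ofNat_ne_top]
  · -- b ≠ ⊤
    have hat : a ≠ ⊤ := fun h => hbt (top_le_iff.mp (h ▸ hab))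
    have habt : a + b ≠ ⊤ := ENNReal.add_ne_top.mpr ⟨hat, hbt⟩
    have hmid : (a + b) / 2 ≠ ⊤ := (ENNReal.div_lt_top habt two_ne_zero).ne
    have hL1 : (bkPsi a + bkPsi b) / 2 ≠ ⊤ :=
      (ENNReal.div_lt_top (ENNReal.add_ne_top.mpr ⟨bkPsi_ne_top a, bkPsi_ne_top b⟩)
        two_ne_zero).ne
    have hL2 : (bkPsi b - bkPsi a) ^ 2 / 4 ≠ ⊤ :=
      (ENNReal.div_lt_top (by
        simp only [ne_eq, ENNReal.pow_eq_top_iff]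
        exact fun h => (tsub_le_self.trans_lt (bkPsi_ne_top b).lt_top).ne h.1) (by norm_num)).ne
    have hL : (bkPsi a + bkPsi b) / 2 + (bkPsi b - bkPsi a) ^ 2 / 4 ≠ ⊤ :=
      ENNReal.add_ne_top.mpr ⟨hL1, hL2⟩
    rw [← ENNReal.toReal_le_toReal hL (bkPsi_ne_top _)]
    have hsub : (bkPsi b - bkPsi a).toReal = (bkPsi b).toReal - (bkPsi a).toReal :=
      ENNReal.toReal_sub_of_le (bkPsi_mono hab) (bkPsi_ne_top b)
    rw [ENNReal.toReal_add, ENNReal.toReal_div, ENNReal.toReal_div, ENNReal.toReal_add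
        (bkPsi_ne_top a) (bkPsi_ne_top b), ENNReal.toReal_pow, hsub, bkPsi_toReal hmid,
        ENNReal.toReal_div, ENNReal.toReal_add hat hbt, bkPsi_toReal hat, bkPsi_toReal hbt]
    · simp only [ENNReal.toReal_ofNat]
      exact bk_real_key ENNReal.toReal_nonneg ENNReal.toReal_nonneg
    · exact hL1
    · exact hL2

lemma bkPsi_concave (a b : ℝ≥0∞) :
    (bkPsi a + bkPsi b) / 2 +
      ((bkPsi a - bkPsi b) ^ 2 + (bkPsi b - bkPsi a) ^ 2) / 4 ≤ bkPsi ((a + b) / 2) := by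
  rcases le_total a b with h | h
  · exact bkPsi_concave_aux h
  · rw [add_comm a b, add_comm (bkPsi a), add_comm ((bkPsi a - bkPsi b) ^ 2)]
    exact bkPsi_concave_aux h

end BKaux


lemma bk_liminf_monotone (u : ℕ → ℝ≥0∞) (hu : Monotone u) :
    Filter.liminf u Filter.atTop = ⨆ n, u n := by
  rw [liminf_eq_iSup_iInf_of_nat]
  congr 1
  funext n
  exact le_antisymm (iInf₂_le n le_rfl) (le_iInf₂ fun i hi => hu hi)

lemma bk_liminf_add_le (u v : ℕ → ℝ≥0∞) :
    Filter.liminf (fun n => u n + v n) Filter.atTop ≤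
      Filter.limsup u Filter.atTop + Filter.liminf v Filter.atTop := by
  rw [liminf_eq_iSup_iInf_of_nat, limsup_eq_iInf_iSup_of_nat, liminf_eq_iSup_iInf_of_nat]
  refine iSup_le fun n => ?_
  have step : ∀ m : ℕ, (⨅ k, ⨅ _ : n ≤ k, (u k + v k)) ≤
      (⨆ j, ⨆ _ : m ≤ j, u j) + ⨆ N, ⨅ k, ⨅ _ : N ≤ k, v k := by
    intro m
    set N := max n m with hN
    calc (⨅ k, ⨅ _ : n ≤ k, (u k + v k)) ≤ ⨅ k, ⨅ _ : N ≤ k, (u k + v k) :=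
          le_iInf₂ fun k hk => iInf₂_le k ((le_max_left n m).trans hk)
    _ ≤ ⨅ k, ⨅ _ : N ≤ k, ((⨆ j, ⨆ _ : m ≤ j, u j) + v k) :=
          le_iInf₂ fun k hk => (iInf₂_le k hk).trans
            (add_le_add_left (le_iSup₂ (f := fun j (_ : m ≤ j) => u j) k
              ((le_max_right n m).trans hk)) _)
    _ = (⨆ j, ⨆ _ : m ≤ j, u j) + ⨅ k, ⨅ _ : N ≤ k, v k := by
          simp_rw [ENNReal.add_iInf]
    _ ≤ (⨆ j, ⨆ _ : m ≤ j, u j) + ⨆ N', ⨅ k, ⨅ _ : N' ≤ k, v k :=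
          add_le_add_right (le_iSup (fun N' => ⨅ k, ⨅ _ : N' ≤ k, v k) N) _
  calc (⨅ k, ⨅ _ : n ≤ k, (u k + v k))
      ≤ ⨅ m, ((⨆ j, ⨆ _ : m ≤ j, u j) + ⨆ N, ⨅ k, ⨅ _ : N ≤ k, v k) := le_iInf step
  _ = (⨅ m, ⨆ j, ⨆ _ : m ≤ j, u j) + ⨆ N, ⨅ k, ⨅ _ : N ≤ k, v k := ENNReal.iInf_add.symm

lemma bk_le_liminf_add (u v : ℕ → ℝ≥0∞) :
    Filter.liminf u Filter.atTop + Filter.liminf v Filter.atTop ≤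
      Filter.liminf (fun n => u n + v n) Filter.atTop := by
  rw [liminf_eq_iSup_iInf_of_nat, liminf_eq_iSup_iInf_of_nat, liminf_eq_iSup_iInf_of_nat]
  refine ENNReal.iSup_add_iSup_le fun n m => ?_
  set N := max n m
  calc (⨅ i, ⨅ _ : n ≤ i, u i) + ⨅ i, ⨅ _ : m ≤ i, v i
      ≤ ⨅ k, ⨅ _ : N ≤ k, (u k + v k) := le_iInf₂ fun k hk =>
        add_le_add (iInf₂_le k ((le_max_left n m).trans hk))
          (iInf₂_le k ((le_max_right n m).trans hk))
  _ ≤ ⨆ n', ⨅ k, ⨅ _ : n' ≤ k, (u k + v k) :=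
        le_iSup (fun n' => ⨅ k, ⨅ _ : n' ≤ k, (u k + v k)) N


lemma bk_add_self_div_two (z : ℝ≥0∞) : (z + z) / 2 = z := by
  rw [← two_mul, div_eq_mul_inv, mul_comm (2:ℝ≥0∞) z, mul_assoc,
    ENNReal.mul_inv_cancel two_ne_zero ENNReal.ofNat_ne_top, mul_one]

lemma bk_two_mul_div_two (z : ℝ≥0∞) : 2 * z / 2 = z := by
  rw [two_mul]; exact bk_add_self_div_two z

section Komlos

variable {Ω : Type*} [MeasurableSpace Ω]

/-- Convex combination of the functions `h` with weights `w`. -/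
noncomputable def bkG (h : ℕ → Ω → ℝ≥0∞) (w : ℕ → ℝ≥0∞) (x : Ω) : ℝ≥0∞ := ∑' k, w k * h k x

/-- Weights supported on `{n, n+1, ...}` summing to one. -/
def bkW (n : ℕ) : Set (ℕ → ℝ≥0∞) := {w | (∀ k < n, w k = 0) ∧ ∑' k, w k = 1}

/-- The functional to (almost) maximize. -/
noncomputable def bkI (ν : Measure Ω) (h : ℕ → Ω → ℝ≥0∞) (w : ℕ → ℝ≥0∞) : ℝ≥0∞ :=
  ∫⁻ x, bkPsi (bkG h w x) ∂ν

/-- The maximal value over tail-supported weights. -/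
noncomputable def bkS (ν : Measure Ω) (h : ℕ → Ω → ℝ≥0∞) (n : ℕ) : ℝ≥0∞ :=
  ⨆ w ∈ bkW n, bkI ν h w

variable (ν : Measure Ω) [IsFiniteMeasure ν] (h : ℕ → Ω → ℝ≥0∞) (hm : ∀ n, Measurable (h n))

lemma bkG_meas (hm : ∀ n, Measurable (h n)) (w : ℕ → ℝ≥0∞) : Measurable (bkG h w) :=
  Measurable.ennreal_tsum fun k => (hm k).const_mul _

lemma bkI_meas (hm : ∀ n, Measurable (h n)) (w : ℕ → ℝ≥0∞) :
    Measurable fun x => bkPsi (bkG h w x) :=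
  bkPsi_continuous.measurable.comp (bkG_meas h hm w)

lemma bkI_le (w : ℕ → ℝ≥0∞) : bkI ν h w ≤ ν Set.univ := by
  calc bkI ν h w ≤ ∫⁻ _, 1 ∂ν := lintegral_mono fun x => bkPsi_le_one _
  _ = ν Set.univ := lintegral_one

lemma bkW_single (n : ℕ) : (fun k => if k = n then (1:ℝ≥0∞) else 0) ∈ bkW n :=
  ⟨fun k hk => if_neg hk.ne, by simp [tsum_ite_eq]⟩

lemma bkS_ne_top (n : ℕ) : bkS ν h n ≠ ⊤ :=
  ((iSup₂_le fun w _ => bkI_le ν h w).trans_lt (measure_lt_top ν _)).ne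

lemma bkS_anti : Antitone (bkS ν h) := fun n m hnm => iSup₂_le fun w hw =>
  le_iSup₂_of_le w ⟨fun k hk => hw.1 k (hk.trans_le hnm), hw.2⟩ le_rfl

lemma bk_komlos (hm : ∀ n, Measurable (h n)) :
    ∃ w : ℕ → ℕ → ℝ≥0∞, (∀ n, ∑' k, w n k = 1) ∧ (∀ n k, k < n → w n k = 0) ∧
      ∀ᵐ x ∂ν, liminf (fun n => ∑' k, w n k * h k x) atTop
             = limsup (fun n => ∑' k, w n k * h k x) atTop := by
  classical
  set r : ℝ≥0∞ := 2⁻¹ with hrdef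
  have hr0 : r ≠ 0 := by simp [hrdef]
  have hrt : r ≠ ⊤ := by simp [hrdef]
  have hr1 : r < 1 := by rw [hrdef]; exact ENNReal.inv_lt_one.mpr one_lt_two
  have hrsub : (1 : ℝ≥0∞) - r = r := by
    rw [hrdef]
    conv_lhs => rw [← ENNReal.inv_two_add_inv_two]
    exact ENNReal.add_sub_cancel_left (by simp)
  have hgeomtsum : ∑' j : ℕ, r ^ j = 2 := by
    rw [ENNReal.tsum_geometric, hrsub, hrdef, inv_inv]
  have hrpow0 : Tendsto (fun n : ℕ => r ^ n) atTop (nhds 0) :=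
    ENNReal.tendsto_pow_atTop_nhds_zero_of_lt_one hr1
  set sL : ℝ≥0∞ := ⨅ n, bkS ν h n with hsL
  have hsLtop : sL ≠ ⊤ := ((iInf_le (bkS ν h) 0).trans_lt (bkS_ne_top ν h 0).lt_top).ne
  -- near maximizers
  have hchoice : ∀ n, ∃ w ∈ bkW n, bkS ν h n < bkI ν h w + r ^ n := by
    intro n
    by_contra hcon
    push_neg at hcon
    rcases eq_or_ne (bkS ν h n) 0 with h0 | h0
    · have := hcon _ (bkW_single n)
      rw [h0, le_zero_iff, add_eq_zero] at this
      exact pow_ne_zero n hr0 this.2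
    · have h1 : bkS ν h n ≤ bkS ν h n - r ^ n :=
        iSup₂_le fun w hw => ENNReal.le_sub_of_add_le_right (pow_ne_top hrt) (hcon w hw)
      exact absurd h1 (not_le.mpr (ENNReal.sub_lt_self (bkS_ne_top ν h n) h0 (pow_ne_zero n hr0)))
  choose w0 hw0W hw0 using hchoice
  -- the pair estimate
  have hpair : ∀ n m, n ≤ m →
      (∫⁻ x, ((bkPsi (bkG h (w0 n) x) - bkPsi (bkG h (w0 m) x)) ^ 2
        + (bkPsi (bkG h (w0 m) x) - bkPsi (bkG h (w0 n) x)) ^ 2) ∂ν)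
        ≤ 4 * (bkS ν h n + r ^ n - sL) := by
    intro n m hnm
    have humeas : Measurable fun x => bkPsi (bkG h (w0 n) x) := bkI_meas h hm _
    have hvmeas : Measurable fun x => bkPsi (bkG h (w0 m) x) := bkI_meas h hm _
    have hDmeas : Measurable fun x => (bkPsi (bkG h (w0 n) x) - bkPsi (bkG h (w0 m) x)) ^ 2
        + (bkPsi (bkG h (w0 m) x) - bkPsi (bkG h (w0 n) x)) ^ 2 :=
      ((humeas.sub hvmeas).pow_const 2).add ((hvmeas.sub humeas).pow_const 2)
    have hmidW : (fun k => (w0 n k + w0 m k) / 2) ∈ bkW n := by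
      constructor
      · intro k hk
        simp [(hw0W n).1 k hk, (hw0W m).1 k (hk.trans_le hnm)]
      · have e : ∑' k, (w0 n k + w0 m k) / 2 = ((∑' k, w0 n k) + ∑' k, w0 m k) / 2 := by
          simp only [div_eq_mul_inv]
          rw [ENNReal.tsum_mul_right, ENNReal.tsum_add]
        rw [e, (hw0W n).2, (hw0W m).2, one_add_one_eq_two,
          ENNReal.div_self two_ne_zero ENNReal.ofNat_ne_top]
    have hGmid : ∀ x, bkG h (fun k => (w0 n k + w0 m k) / 2) x
        = (bkG h (w0 n) x + bkG h (w0 m) x) / 2 := by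
      intro x
      simp only [bkG, div_eq_mul_inv]
      calc ∑' k, (w0 n k + w0 m k) * 2⁻¹ * h k x
          = ∑' k, (w0 n k * h k x + w0 m k * h k x) * 2⁻¹ := tsum_congr fun k => by ring
      _ = (∑' k, (w0 n k * h k x + w0 m k * h k x)) * 2⁻¹ := ENNReal.tsum_mul_right
      _ = ((∑' k, w0 n k * h k x) + ∑' k, w0 m k * h k x) * 2⁻¹ := by rw [ENNReal.tsum_add]
    have hpt : ∀ x, (bkPsi (bkG h (w0 n) x) + bkPsi (bkG h (w0 m) x)) / 2
        + ((bkPsi (bkG h (w0 n) x) - bkPsi (bkG h (w0 m) x)) ^ 2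
          + (bkPsi (bkG h (w0 m) x) - bkPsi (bkG h (w0 n) x)) ^ 2) / 4
        ≤ bkPsi (bkG h (fun k => (w0 n k + w0 m k) / 2) x) := fun x => by
      rw [hGmid x]; exact bkPsi_concave _ _
    have hint : (bkI ν h (w0 n) + bkI ν h (w0 m)) / 2
        + (∫⁻ x, ((bkPsi (bkG h (w0 n) x) - bkPsi (bkG h (w0 m) x)) ^ 2
          + (bkPsi (bkG h (w0 m) x) - bkPsi (bkG h (w0 n) x)) ^ 2) ∂ν) / 4
        ≤ bkI ν h (fun k => (w0 n k + w0 m k) / 2) := by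
      refine le_trans (le_of_eq ?_) (lintegral_mono hpt)
      simp only [div_eq_mul_inv]
      rw [lintegral_add_left (f := fun x => (bkPsi (bkG h (w0 n) x) + bkPsi (bkG h (w0 m) x)) * 2⁻¹) ((humeas.add hvmeas).mul_const _),
        lintegral_mul_const (f := fun x => bkPsi (bkG h (w0 n) x) + bkPsi (bkG h (w0 m) x)) _ (humeas.add hvmeas), lintegral_mul_const _ hDmeas,
        lintegral_add_left humeas]
      rfl
    have h1 : sL ≤ bkI ν h (w0 n) + r ^ n := (iInf_le _ n).trans (hw0 n).le
    have h2 : sL ≤ bkI ν h (w0 m) + r ^ n := by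
      refine (iInf_le _ m).trans ((hw0 m).le.trans (add_le_add_right ?_ _))
      exact pow_le_pow_right_of_le_one' hr1.le hnm
    have havg : sL ≤ (bkI ν h (w0 n) + bkI ν h (w0 m)) / 2 + r ^ n := by
      conv_lhs => rw [← bk_add_self_div_two sL]
      calc (sL + sL) / 2 ≤ ((bkI ν h (w0 n) + r ^ n) + (bkI ν h (w0 m) + r ^ n)) / 2 :=
            ENNReal.div_le_div_right (add_le_add h1 h2) 2
      _ = ((bkI ν h (w0 n) + bkI ν h (w0 m)) + 2 * r ^ n) / 2 := by
            rw [show (bkI ν h (w0 n) + r ^ n) + (bkI ν h (w0 m) + r ^ n)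
              = (bkI ν h (w0 n) + bkI ν h (w0 m)) + 2 * r ^ n by ring]
      _ = (bkI ν h (w0 n) + bkI ν h (w0 m)) / 2 + r ^ n := by
            rw [ENNReal.add_div, bk_two_mul_div_two]
    have hImid : bkI ν h (fun k => (w0 n k + w0 m k) / 2) ≤ bkS ν h n :=
      le_iSup₂_of_le _ hmidW le_rfl
    have hmain : (∫⁻ x, ((bkPsi (bkG h (w0 n) x) - bkPsi (bkG h (w0 m) x)) ^ 2
        + (bkPsi (bkG h (w0 m) x) - bkPsi (bkG h (w0 n) x)) ^ 2) ∂ν) / 4 + sL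
        ≤ bkS ν h n + r ^ n := by
      calc _ ≤ (∫⁻ x, ((bkPsi (bkG h (w0 n) x) - bkPsi (bkG h (w0 m) x)) ^ 2
            + (bkPsi (bkG h (w0 m) x) - bkPsi (bkG h (w0 n) x)) ^ 2) ∂ν) / 4
            + ((bkI ν h (w0 n) + bkI ν h (w0 m)) / 2 + r ^ n) := add_le_add_right havg _
      _ = ((bkI ν h (w0 n) + bkI ν h (w0 m)) / 2
            + (∫⁻ x, ((bkPsi (bkG h (w0 n) x) - bkPsi (bkG h (w0 m) x)) ^ 2
            + (bkPsi (bkG h (w0 m) x) - bkPsi (bkG h (w0 n) x)) ^ 2) ∂ν) / 4) + r ^ n := by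
            ring
      _ ≤ bkI ν h (fun k => (w0 n k + w0 m k) / 2) + r ^ n := add_le_add_left hint _
      _ ≤ bkS ν h n + r ^ n := add_le_add_left hImid _
    have hq := ENNReal.le_sub_of_add_le_right hsLtop hmain
    calc (∫⁻ x, ((bkPsi (bkG h (w0 n) x) - bkPsi (bkG h (w0 m) x)) ^ 2
          + (bkPsi (bkG h (w0 m) x) - bkPsi (bkG h (w0 n) x)) ^ 2) ∂ν)
        = 4 * ((∫⁻ x, ((bkPsi (bkG h (w0 n) x) - bkPsi (bkG h (w0 m) x)) ^ 2
          + (bkPsi (bkG h (w0 m) x) - bkPsi (bkG h (w0 n) x)) ^ 2) ∂ν) / 4) := by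
          rw [ENNReal.mul_div_cancel (by norm_num) (by norm_num)]
    _ ≤ 4 * (bkS ν h n + r ^ n - sL) := mul_le_mul_right hq 4
  -- delta tends to zero
  have hdelta : ∀ ε : ℝ≥0∞, ε ≠ 0 → ∃ N, ∀ i ≥ N, 4 * (bkS ν h i + r ^ i - sL) ≤ ε := by
    intro ε hε
    have hε8 : ε / 8 ≠ 0 := by
      simp only [ne_eq, ENNReal.div_eq_zero_iff, not_or]
      exact ⟨hε, by norm_num⟩
    obtain ⟨N₁, hN₁⟩ : ∃ N₁, bkS ν h N₁ < sL + ε / 8 := by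
      have hlt : sL < sL + ε / 8 := ENNReal.lt_add_right hsLtop hε8
      rw [hsL] at hlt ⊢
      exact iInf_lt_iff.mp hlt
    obtain ⟨N₂, hN₂⟩ : ∃ N₂, r ^ N₂ < ε / 8 :=
      (hrpow0.eventually_lt_const (pos_iff_ne_zero.mpr hε8)).exists
    refine ⟨max N₁ N₂, fun i hi => ?_⟩
    have hsle : bkS ν h i ≤ bkS ν h N₁ := bkS_anti ν h ((le_max_left _ _).trans hi)
    have hrle : r ^ i ≤ r ^ N₂ := pow_le_pow_right_of_le_one' hr1.le ((le_max_right _ _).trans hi)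
    have hsum : bkS ν h i + r ^ i ≤ (ε / 8 + ε / 8) + sL := by
      calc bkS ν h i + r ^ i ≤ (sL + ε / 8) + ε / 8 :=
            add_le_add (hsle.trans hN₁.le) (hrle.trans hN₂.le)
      _ = (ε / 8 + ε / 8) + sL := by ring
    have hq : bkS ν h i + r ^ i - sL ≤ ε / 8 + ε / 8 := tsub_le_iff_right.mpr hsum
    calc 4 * (bkS ν h i + r ^ i - sL) ≤ 4 * (ε / 8 + ε / 8) := mul_le_mul_right hq 4
    _ = 8 * (ε / 8) := by ring
    _ = ε := ENNReal.mul_div_cancel (by norm_num) (by norm_num)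
  -- extraction of indices
  have hstep : ∀ j : ℕ, ∃ N, ∀ i ≥ N, 4 * (bkS ν h i + r ^ i - sL) ≤ r ^ (3 * j) :=
    fun j => hdelta _ (pow_ne_zero _ hr0)
  choose Nf hNf using hstep
  let nidx : ℕ → ℕ := fun j => Nat.rec (Nf 0) (fun j' ih => max (ih + 1) (Nf (j' + 1))) j
  have hnidxsucc : ∀ j, nidx (j + 1) = max (nidx j + 1) (Nf (j + 1)) := fun _ => rfl
  have hnidxNf : ∀ j, Nf j ≤ nidx j := by
    intro j
    cases j with
    | zero => exact le_rfl
    | succ j => rw [hnidxsucc]; exact le_max_right _ _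
  have hnidxmono : ∀ j, nidx j < nidx (j + 1) := fun j =>
    lt_of_lt_of_le (Nat.lt_succ_self _) ((hnidxsucc j) ▸ le_max_left _ _)
  have hnidxle : ∀ j, j ≤ nidx j := by
    intro j
    induction j with
    | zero => exact Nat.zero_le _
    | succ j ih => exact Nat.succ_le_of_lt (lt_of_le_of_lt ih (hnidxmono j))
  have hDle : ∀ j : ℕ,
      (∫⁻ x, ((bkPsi (bkG h (w0 (nidx j)) x) - bkPsi (bkG h (w0 (nidx (j+1))) x)) ^ 2
        + (bkPsi (bkG h (w0 (nidx (j+1))) x) - bkPsi (bkG h (w0 (nidx j)) x)) ^ 2) ∂ν)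
        ≤ r ^ (3 * j) :=
    fun j => (hpair _ _ (hnidxmono j).le).trans (hNf j (nidx j) (hnidxNf j))
  set Bad : ℕ → Set Ω := fun j => {x |
      r ^ (2 * j) < (bkPsi (bkG h (w0 (nidx j)) x) - bkPsi (bkG h (w0 (nidx (j+1))) x)) ^ 2
        + (bkPsi (bkG h (w0 (nidx (j+1))) x) - bkPsi (bkG h (w0 (nidx j)) x)) ^ 2} with hBadDef
  have hBadle : ∀ j, ν (Bad j) ≤ r ^ j := by
    intro j
    have hDmeas : Measurable fun x =>
        (bkPsi (bkG h (w0 (nidx j)) x) - bkPsi (bkG h (w0 (nidx (j+1))) x)) ^ 2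
        + (bkPsi (bkG h (w0 (nidx (j+1))) x) - bkPsi (bkG h (w0 (nidx j)) x)) ^ 2 :=
      (((bkI_meas h hm _).sub (bkI_meas h hm _)).pow_const 2).add
        (((bkI_meas h hm _).sub (bkI_meas h hm _)).pow_const 2)
    have hcheb := mul_meas_ge_le_lintegral₀ (μ := ν) hDmeas.aemeasurable (r ^ (2 * j))
    have hsub : ν (Bad j) ≤ ν {x |
        r ^ (2 * j) ≤ (bkPsi (bkG h (w0 (nidx j)) x) - bkPsi (bkG h (w0 (nidx (j+1))) x)) ^ 2
        + (bkPsi (bkG h (w0 (nidx (j+1))) x) - bkPsi (bkG h (w0 (nidx j)) x)) ^ 2} := by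
      refine measure_mono fun x hx => ?_
      simp only [hBadDef, Set.mem_setOf_eq] at hx ⊢
      exact le_of_lt hx
    have hchain : r ^ (2 * j) * ν (Bad j) ≤ r ^ (2 * j) * r ^ j := by
      calc r ^ (2 * j) * ν (Bad j) ≤ r ^ (2 * j) * ν {x |
            r ^ (2 * j) ≤ (bkPsi (bkG h (w0 (nidx j)) x) - bkPsi (bkG h (w0 (nidx (j+1))) x)) ^ 2
            + (bkPsi (bkG h (w0 (nidx (j+1))) x) - bkPsi (bkG h (w0 (nidx j)) x)) ^ 2} :=
            mul_le_mul_right hsub _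
      _ ≤ _ := hcheb
      _ ≤ r ^ (3 * j) := hDle j
      _ = r ^ (2 * j) * r ^ j := by rw [← pow_add]; congr 1; ring
    exact (ENNReal.mul_le_mul_iff_right (pow_ne_zero _ hr0) (pow_ne_top hrt)).mp hchain
  have hsumBad : ∑' j, ν (Bad j) ≠ ⊤ :=
    ne_top_of_le_ne_top (by rw [hgeomtsum]; exact ENNReal.ofNat_ne_top) (ENNReal.tsum_le_tsum hBadle)
  have hBC : ν (limsup Bad atTop) = 0 := measure_limsup_atTop_eq_zero hsumBad
  have haegood : ∀ᵐ x ∂ν, x ∉ limsup Bad atTop := by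
    rw [ae_iff]
    simpa using hBC
  refine ⟨fun j => w0 (nidx j), fun j => (hw0W (nidx j)).2,
    fun j k hk => (hw0W (nidx j)).1 k (lt_of_lt_of_le hk (hnidxle j)), ?_⟩
  filter_upwards [haegood] with x hx
  have hev : ∃ J, ∀ j ≥ J,
      (bkPsi (bkG h (w0 (nidx j)) x) - bkPsi (bkG h (w0 (nidx (j+1))) x)) ^ 2
        + (bkPsi (bkG h (w0 (nidx (j+1))) x) - bkPsi (bkG h (w0 (nidx j)) x)) ^ 2
        ≤ r ^ (2 * j) := by
    rw [Filter.mem_limsup_iff_frequently_mem, Filter.not_frequently] at hx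
    obtain ⟨J, hJ⟩ := eventually_atTop.mp hx
    exact ⟨J, fun j hj => not_lt.mp (hJ j hj)⟩
  obtain ⟨J, hJ⟩ := hev
  set b : ℕ → ℝ≥0∞ := fun j => bkPsi (bkG h (w0 (nidx j)) x) with hbdef
  have hstepb : ∀ j, J ≤ j → (b j - b (j+1)) ≤ r ^ j ∧ (b (j+1) - b j) ≤ r ^ j := by
    intro j hj
    have hD := hJ j hj
    constructor
    · by_contra hlt
      push_neg at hlt
      have h2 : (r ^ j) ^ 2 < (b j - b (j+1)) ^ 2 := ENNReal.pow_lt_pow_left two_ne_zero hlt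
      have h3 : (b j - b (j+1)) ^ 2 ≤ r ^ (2 * j) := le_trans le_self_add hD
      rw [show 2 * j = j * 2 by ring, pow_mul] at h3
      exact absurd (h2.trans_le h3) (lt_irrefl _)
    · by_contra hlt
      push_neg at hlt
      have h2 : (r ^ j) ^ 2 < (b (j+1) - b j) ^ 2 := ENNReal.pow_lt_pow_left two_ne_zero hlt
      have h3 : (b (j+1) - b j) ^ 2 ≤ r ^ (2 * j) := le_trans le_add_self hD
      rw [show 2 * j = j * 2 by ring, pow_mul] at h3
      exact absurd (h2.trans_le h3) (lt_irrefl _)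
  have hgeo : ∀ k l : ℕ, (∑ j ∈ Finset.Ico k l, r ^ j) ≤ 2 * r ^ k := by
    intro k l
    calc ∑ j ∈ Finset.Ico k l, r ^ j = ∑ j ∈ Finset.range (l - k), r ^ (k + j) := by
          rw [Finset.sum_Ico_eq_sum_range]
    _ = r ^ k * ∑ j ∈ Finset.range (l - k), r ^ j := by
          rw [Finset.mul_sum]
          exact Finset.sum_congr rfl fun j _ => pow_add r k j
    _ ≤ r ^ k * ∑' j : ℕ, r ^ j := mul_le_mul_right (ENNReal.sum_le_tsum _) _
    _ = r ^ k * 2 := by rw [hgeomtsum]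
    _ = 2 * r ^ k := mul_comm _ _
  have htel : ∀ k, J ≤ k → ∀ l, k ≤ l →
      b l ≤ b k + ∑ j ∈ Finset.Ico k l, r ^ j ∧
      b k ≤ b l + ∑ j ∈ Finset.Ico k l, r ^ j := by
    intro k hJk l hkl
    induction l, hkl using Nat.le_induction with
    | base => simp
    | succ l hkl ih =>
      have hstepl := hstepb l (hJk.trans hkl)
      rw [Finset.sum_Ico_succ_top hkl]
      constructor
      · calc b (l+1) ≤ b l + r ^ l := tsub_le_iff_left.mp hstepl.2
        _ ≤ (b k + ∑ j ∈ Finset.Ico k l, r ^ j) + r ^ l := add_le_add_left ih.1 _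
        _ = b k + (∑ j ∈ Finset.Ico k l, r ^ j + r ^ l) := by ring
      · calc b k ≤ b l + ∑ j ∈ Finset.Ico k l, r ^ j := ih.2
        _ ≤ (b (l+1) + r ^ l) + ∑ j ∈ Finset.Ico k l, r ^ j :=
              add_le_add_left (tsub_le_iff_left.mp hstepl.1) _
        _ = b (l+1) + (∑ j ∈ Finset.Ico k l, r ^ j + r ^ l) := by ring
  have hkey : limsup b atTop ≤ liminf b atTop := by
    refine ENNReal.le_of_forall_pos_le_add fun ε hε _hfin => ?_
    obtain ⟨k0, hk0⟩ : ∃ k0 : ℕ, 4 * r ^ k0 < (ε : ℝ≥0∞) := by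
      have h4 : Tendsto (fun n : ℕ => 4 * r ^ n) atTop (nhds 0) := by
        have := ENNReal.Tendsto.const_mul (a := 4) hrpow0 (Or.inr (by norm_num))
        simpa using this
      exact (h4.eventually_lt_const (by exact_mod_cast hε)).exists
    set k := max k0 J with hkdef
    have hkJ : J ≤ k := le_max_right _ _
    have hrk : 4 * r ^ k ≤ 4 * r ^ k0 :=
      mul_le_mul_right (pow_le_pow_right_of_le_one' hr1.le (le_max_left _ _)) _
    have h1 : ∀ l, k ≤ l → b l ≤ b k + 2 * r ^ k := fun l hl =>
      ((htel k hkJ l hl).1).trans (add_le_add_right (hgeo k l) _)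
    have h2 : ∀ l, k ≤ l → b k ≤ b l + 2 * r ^ k := fun l hl =>
      ((htel k hkJ l hl).2).trans (add_le_add_right (hgeo k l) _)
    have hup : limsup b atTop ≤ b k + 2 * r ^ k :=
      limsup_le_of_le (by isBoundedDefault) (eventually_atTop.mpr ⟨k, h1⟩)
    have hdown : b k ≤ liminf b atTop + 2 * r ^ k := by
      have hle : b k - 2 * r ^ k ≤ liminf b atTop :=
        le_liminf_of_le (by isBoundedDefault)
          (eventually_atTop.mpr ⟨k, fun l hl => tsub_le_iff_right.mpr (h2 l hl)⟩)
      exact tsub_le_iff_right.mp hle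
    calc limsup b atTop ≤ b k + 2 * r ^ k := hup
    _ ≤ (liminf b atTop + 2 * r ^ k) + 2 * r ^ k := add_le_add_left hdown _
    _ = liminf b atTop + 4 * r ^ k := by ring
    _ ≤ liminf b atTop + 4 * r ^ k0 := add_le_add_right hrk _
    _ ≤ liminf b atTop + ε := add_le_add_right hk0.le _
  have heq : liminf b atTop = limsup b atTop := le_antisymm liminf_le_limsup hkey
  have htends : Tendsto b atTop (nhds (liminf b atTop)) :=
    tendsto_of_liminf_eq_limsup rfl heq.symm
  have hGeq : ∀ j, bkG h (w0 (nidx j)) x = bkPsiInv (b j) := fun j => (bkPsiInv_bkPsi _).symm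
  have htends2 : Tendsto (fun j => bkG h (w0 (nidx j)) x) atTop
      (nhds (bkPsiInv (liminf b atTop))) := by
    simp_rw [hGeq]
    exact (bkPsiInv_continuous.tendsto _).comp htends
  exact htends2.liminf_eq.trans htends2.limsup_eq.symm

end Komlos

/-- (From the proof of Theorem 4.1 in Bartl–Kupper, "A pointwise bipolar theorem".)
If for `i = 1,2` there is `μᵢ* ∈ ca₊(Ωᵢ)` with `μᵢ ≪ μᵢ*` for all `μᵢ ∈ Hᵢ°`, then the
set `H` is closed under `liminf`; equivalently, for every pointwise increasing sequence
`(hⁿ)` in `H`, the pointwise supremum `sup_n hⁿ` belongs to `H`. -/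
theorem transportSet_liminfClosed
    {Ω₁ Ω₂ : Type*}
    [MetricSpace Ω₁] [SigmaCompactSpace Ω₁] [MeasurableSpace Ω₁] [BorelSpace Ω₁]
    [MetricSpace Ω₂] [SigmaCompactSpace Ω₂] [MeasurableSpace Ω₂] [BorelSpace Ω₂]
    (H₁ : Set (Ω₁ → ℝ≥0∞)) (H₂ : Set (Ω₂ → ℝ≥0∞))
    (hmeas₁ : ∀ f ∈ H₁, Measurable f) (hmeas₂ : ∀ f ∈ H₂, Measurable f)
    (hne₁ : H₁.Nonempty) (hne₂ : H₂.Nonempty)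
    (hmono₁ : MonotoneSet H₁) (hmono₂ : MonotoneSet H₂)
    (hconv₁ : ConvexSet H₁) (hconv₂ : ConvexSet H₂)
    (hreg₁ : RegularSet H₁) (hreg₂ : RegularSet H₂)
    (hliminf₁ : LiminfClosed H₁) (hliminf₂ : LiminfClosed H₂)
    (hdom₁ : ∃ ν₁ : Measure Ω₁, IsFiniteMeasure ν₁ ∧ ∀ μ ∈ polar H₁, μ ≪ ν₁)
    (hdom₂ : ∃ ν₂ : Measure Ω₂, IsFiniteMeasure ν₂ ∧ ∀ μ ∈ polar H₂, μ ≪ ν₂) :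
    LiminfClosed (transportSet H₁ H₂) ∧
      ∀ h : ℕ → Ω₁ × Ω₂ → ℝ≥0∞, (∀ n, h n ∈ transportSet H₁ H₂) → Monotone h →
        (fun ω => ⨆ n, h n ω) ∈ transportSet H₁ H₂ := by
  obtain ⟨ν₁, hν₁fin, hν₁ac⟩ := hdom₁
  obtain ⟨ν₂, hν₂fin, hν₂ac⟩ := hdom₂
  haveI := hν₁fin
  haveI := hν₂fin
  have main : LiminfClosed (transportSet H₁ H₂) := by
    intro f hf
    have hfm : ∀ n, Measurable (f n) := fun n => (hf n).1
    choose h1 h2 h1m h2m hb hp using fun n => (hf n).2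
    obtain ⟨w, hw1, hw0, hae⟩ := bk_komlos ν₁ h1 h1m
    have hc1m : ∀ n, Measurable fun x => ∑' k, w n k * h1 k x :=
      fun n => Measurable.ennreal_tsum fun k => (h1m k).const_mul _
    have hc2m : ∀ n, Measurable fun y => ∑' k, w n k * h2 k y :=
      fun n => Measurable.ennreal_tsum fun k => (h2m k).const_mul _
    refine ⟨Measurable.liminf hfm,
      fun x => limsup (fun n => ∑' k, w n k * h1 k x) atTop,
      fun y => liminf (fun n => ∑' k, w n k * h2 k y) atTop,
      Measurable.limsup hc1m, Measurable.liminf hc2m, ?_, ?_⟩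
    · -- pointwise domination
      intro ω
      have key : ∀ m : ℕ, (⨅ k, ⨅ _ : m ≤ k, f k ω)
          ≤ (∑' k, w m k * h1 k ω.1) + ∑' k, w m k * h2 k ω.2 := by
        intro m
        have e : (∑' k, w m k * h1 k ω.1) + ∑' k, w m k * h2 k ω.2
            = ∑' k, w m k * (h1 k ω.1 + h2 k ω.2) := by
          rw [← ENNReal.tsum_add]
          exact tsum_congr fun k => (mul_add _ _ _).symm
        rw [e]
        calc (⨅ k, ⨅ _ : m ≤ k, f k ω)
            = ∑' k, w m k * (⨅ i, ⨅ _ : m ≤ i, f i ω) := by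
              rw [ENNReal.tsum_mul_right, hw1 m, one_mul]
        _ ≤ ∑' k, w m k * (h1 k ω.1 + h2 k ω.2) := by
              refine ENNReal.tsum_le_tsum fun k => ?_
              rcases lt_or_ge k m with hk | hk
              · simp [hw0 m k hk]
              · exact mul_le_mul_right ((iInf₂_le k hk).trans (hb k ω)) _
      have hA : liminf (fun n => f n ω) atTop
          ≤ liminf (fun m => (∑' k, w m k * h1 k ω.1) + ∑' k, w m k * h2 k ω.2) atTop := by
        rw [liminf_eq_iSup_iInf_of_nat]
        refine iSup_le fun n => ?_
        have h1' : (⨅ i, ⨅ _ : n ≤ i, f i ω)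
            ≤ ⨅ m, ⨅ _ : n ≤ m, ((∑' k, w m k * h1 k ω.1) + ∑' k, w m k * h2 k ω.2) :=
          le_iInf₂ fun m hm => le_trans (le_iInf₂ fun i hi => iInf₂_le i (hm.trans hi)) (key m)
        refine h1'.trans ?_
        rw [liminf_eq_iSup_iInf_of_nat]
        exact le_iSup (fun N => ⨅ m, ⨅ _ : N ≤ m,
          ((∑' k, w m k * h1 k ω.1) + ∑' k, w m k * h2 k ω.2)) n
      exact hA.trans (bk_liminf_add_le _ _)
    · -- the price bound
      have hpoint : ∀ μ₁ ∈ polar H₁, ∀ μ₂ ∈ polar H₂,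
          (∫⁻ x, limsup (fun n => ∑' k, w n k * h1 k x) atTop ∂μ₁)
          + (∫⁻ y, liminf (fun n => ∑' k, w n k * h2 k y) atTop ∂μ₂) ≤ 1 := by
        intro μ₁ hμ₁ μ₂ hμ₂
        have hae1 : ∀ᵐ x ∂μ₁, limsup (fun n => ∑' k, w n k * h1 k x) atTop
            = liminf (fun n => ∑' k, w n k * h1 k x) atTop := by
          have h0 := (hν₁ac μ₁ hμ₁) (ae_iff.mp hae)
          rw [ae_iff]
          refine measure_mono_null ?_ h0
          intro x hx
          simp only [Set.mem_setOf_eq] at hx ⊢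
          exact fun hliminf => hx hliminf.symm
        have hint1 : ∫⁻ x, limsup (fun n => ∑' k, w n k * h1 k x) atTop ∂μ₁
            ≤ liminf (fun n => ∫⁻ x, (∑' k, w n k * h1 k x) ∂μ₁) atTop := by
          calc ∫⁻ x, limsup (fun n => ∑' k, w n k * h1 k x) atTop ∂μ₁
              = ∫⁻ x, liminf (fun n => ∑' k, w n k * h1 k x) atTop ∂μ₁ :=
                lintegral_congr_ae hae1
          _ ≤ _ := lintegral_liminf_le hc1m
        have hint2 : ∫⁻ y, liminf (fun n => ∑' k, w n k * h2 k y) atTop ∂μ₂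
            ≤ liminf (fun n => ∫⁻ y, (∑' k, w n k * h2 k y) ∂μ₂) atTop :=
          lintegral_liminf_le hc2m
        have hXY : ∀ n, (∫⁻ x, (∑' k, w n k * h1 k x) ∂μ₁)
            + (∫⁻ y, (∑' k, w n k * h2 k y) ∂μ₂) ≤ 1 := by
          intro n
          have e1 : ∫⁻ x, (∑' k, w n k * h1 k x) ∂μ₁
              = ∑' k, w n k * ∫⁻ x, h1 k x ∂μ₁ := by
            rw [lintegral_tsum fun k => ((h1m k).const_mul _).aemeasurable]
            exact tsum_congr fun k => lintegral_const_mul _ (h1m k)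
          have e2 : ∫⁻ y, (∑' k, w n k * h2 k y) ∂μ₂
              = ∑' k, w n k * ∫⁻ y, h2 k y ∂μ₂ := by
            rw [lintegral_tsum fun k => ((h2m k).const_mul _).aemeasurable]
            exact tsum_congr fun k => lintegral_const_mul _ (h2m k)
          rw [e1, e2, ← ENNReal.tsum_add]
          calc ∑' k, (w n k * ∫⁻ x, h1 k x ∂μ₁ + w n k * ∫⁻ y, h2 k y ∂μ₂)
              ≤ ∑' k, w n k := by
                refine ENNReal.tsum_le_tsum fun k => ?_
                rw [← mul_add]
                calc w n k * ((∫⁻ x, h1 k x ∂μ₁) + ∫⁻ y, h2 k y ∂μ₂)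
                    ≤ w n k * 1 := by
                      refine mul_le_mul_right (le_trans (add_le_add ?_ ?_) (hp k)) _
                      · exact le_sSup ⟨μ₁, hμ₁, rfl⟩
                      · exact le_sSup ⟨μ₂, hμ₂, rfl⟩
                _ = w n k := mul_one _
          _ = 1 := hw1 n
        calc (∫⁻ x, limsup (fun n => ∑' k, w n k * h1 k x) atTop ∂μ₁)
            + (∫⁻ y, liminf (fun n => ∑' k, w n k * h2 k y) atTop ∂μ₂)
            ≤ liminf (fun n => ∫⁻ x, (∑' k, w n k * h1 k x) ∂μ₁) atTop
              + liminf (fun n => ∫⁻ y, (∑' k, w n k * h2 k y) ∂μ₂) atTop :=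
              add_le_add hint1 hint2
        _ ≤ liminf (fun n => (∫⁻ x, (∑' k, w n k * h1 k x) ∂μ₁)
              + (∫⁻ y, (∑' k, w n k * h2 k y) ∂μ₂)) atTop := bk_le_liminf_add _ _
        _ ≤ 1 := liminf_le_of_frequently_le (Frequently.of_forall hXY)
      have hzero1 : (0 : Measure Ω₁) ∈ polar H₁ := ⟨inferInstance, fun f _ => by simp⟩
      have hzero2 : (0 : Measure Ω₂) ∈ polar H₂ := ⟨inferInstance, fun f _ => by simp⟩
      simp only [priceH]
      set S1 := {x : ℝ≥0∞ | ∃ μ ∈ polar H₁,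
        x = ∫⁻ ω', limsup (fun n => ∑' k, w n k * h1 k ω') atTop ∂μ} with hS1
      set S2 := {x : ℝ≥0∞ | ∃ μ ∈ polar H₂,
        x = ∫⁻ ω', liminf (fun n => ∑' k, w n k * h2 k ω') atTop ∂μ} with hS2
      have hne1 : S1.Nonempty := ⟨_, 0, hzero1, rfl⟩
      have hne2 : S2.Nonempty := ⟨_, 0, hzero2, rfl⟩
      haveI := hne1.to_subtype
      haveI := hne2.to_subtype
      show sSup S1 + sSup S2 ≤ 1
      rw [sSup_eq_iSup' S1, sSup_eq_iSup' S2, ENNReal.iSup_add]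
      refine iSup_le fun a => ?_
      rw [ENNReal.add_iSup]
      refine iSup_le fun c => ?_
      obtain ⟨μ₁, hμ₁, ha⟩ := a.2
      obtain ⟨μ₂, hμ₂, hc⟩ := c.2
      rw [ha, hc]
      exact hpoint μ₁ hμ₁ μ₂ hμ₂
  refine ⟨main, fun h hmem hmono => ?_⟩
  have heq : (fun ω => ⨆ n, h n ω) = fun ω => liminf (fun n => h n ω) atTop :=
    funext fun ω => (bk_liminf_monotone _ fun i j hij => hmono hij ω).symm
  rw [heq]
  exact main h hmem
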